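/- Let s : ℕ → ℝ satisfy s(0) = 1, s positive, s(u+v+1) ≥ κ·s(u)·s(v) for all u,v ≥ 0 with κ > 0, and s(n) ≤ L·(n-1)·s(1)·s(n-1) for all n ≥ 2 with L ≥ 1. Then λ := lim s(n)^{1/n} satisfies λ ≥ (κ·s(n)/(L·(n-1)·s(1)))^{1/n} for every n ≥ 2. -/

import Mathlib

open Filter

theorem stmt_15 (s : ℕ → ℝ) (κ L : ℝ) (lam : ENNReal)
    (hpos : ∀ n, 0 < s n) (h0 : s 0 = 1) (hκ : 0 < κ) (hL : 1 ≤ L)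
    (hsuper : ∀ u v : ℕ, κ * s u * s v ≤ s (u + v + 1))
    (hstep : ∀ n : ℕ, 2 ≤ n → s n ≤ L * ((n : ℝ) - 1) * s 1 * s (n - 1))
    (hlam : Tendsto (fun n : ℕ => ENNReal.ofReal (s n ^ (1 / (n : ℝ)))) atTop
      (nhds lam)) :
    ∀ n : ℕ, 2 ≤ n →
      ENNReal.ofReal ((κ * s n / (L * ((n : ℝ) - 1) * s 1)) ^ (1 / (n : ℝ)))
        ≤ lam := by
  intro n hn
  have hn2 : (2:ℝ) ≤ (n:ℝ) := by exact_mod_cast hn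
  have hd : 0 < L * ((n:ℝ) - 1) * s 1 :=
    mul_pos (mul_pos (lt_of_lt_of_le one_pos hL) (by linarith)) (hpos 1)
  have hbase : κ * s n / (L * ((n : ℝ) - 1) * s 1) ≤ κ * s (n - 1) := by
    rw [div_le_iff₀ hd]
    nlinarith [mul_le_mul_of_nonneg_left (hstep n hn) hκ.le]
  have hx : (κ * s n / (L * ((n : ℝ) - 1) * s 1)) ^ (1 / (n : ℝ))
      ≤ (κ * s (n - 1)) ^ (1 / (n : ℝ)) :=
    Real.rpow_le_rpow (div_nonneg (mul_pos hκ (hpos n)).le hd.le) hbase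
      (by positivity)
  refine le_trans (ENNReal.ofReal_le_ofReal hx) ?_
  clear hx hbase hd hstep hn2
  obtain ⟨m, rfl⟩ : ∃ m, n = m + 2 := ⟨n - 2, by omega⟩
  have hsm : s (m + 2 - 1) = s (m + 1) := by norm_num
  rw [hsm]
  -- subsequence indices
  set φ : ℕ → ℕ := fun k => k * (m + 2) + (m + 1) with hφ
  -- lower bound along subsequence
  have lower : ∀ k : ℕ, κ ^ k * s (m + 1) ^ (k + 1) ≤ s (φ k) := by
    intro k
    induction k with
    | zero => simp [hφ]
    | succ k ih =>
      have hidx : φ (k + 1) = φ k + (m + 1) + 1 := by simp only [hφ]; ring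
      rw [hidx]
      calc κ ^ (k + 1) * s (m + 1) ^ (k + 1 + 1)
          = κ * (κ ^ k * s (m + 1) ^ (k + 1)) * s (m + 1) := by ring
        _ ≤ κ * s (φ k) * s (m + 1) :=
            mul_le_mul_of_nonneg_right
              (mul_le_mul_of_nonneg_left ih hκ.le) (hpos (m + 1)).le
        _ ≤ s (φ k + (m + 1) + 1) := hsuper _ _
  -- lower sequence
  set g : ℕ → ℝ := fun k => (κ ^ k * s (m + 1) ^ (k + 1)) ^ (1 / (φ k : ℝ))
    with hg
  have hgle : ∀ k, g k ≤ s (φ k) ^ (1 / (φ k : ℝ)) := fun k =>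
    Real.rpow_le_rpow (mul_pos (pow_pos hκ k) (pow_pos (hpos _) _)).le
      (lower k) (by positivity)
  -- tendsto of subsequence of s-values
  have hφtop : Tendsto φ atTop atTop := by
    apply tendsto_atTop_mono (f := fun k : ℕ => k) (fun k => ?_) tendsto_id
    calc k ≤ k * (m + 2) := Nat.le_mul_of_pos_right k (by omega)
      _ ≤ φ k := Nat.le_add_right _ _
  have hGs : Tendsto (fun k => ENNReal.ofReal (s (φ k) ^ (1 / (φ k : ℝ))))
      atTop (nhds lam) := hlam.comp hφtop
  -- limit of g
  set A := Real.log κ with hA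
  set B := Real.log (s (m + 1)) with hB
  have hφcast : ∀ k : ℕ, (φ k : ℝ) = (k : ℝ) * (m + 2) + (m + 1) := by
    intro k; simp only [hφ]; push_cast; ring
  have hgexp : ∀ k : ℕ, g k
      = Real.exp (((k : ℝ) * A + ((k : ℝ) + 1) * B) / (φ k : ℝ)) := by
    intro k
    have hb : (0:ℝ) < κ ^ k * s (m + 1) ^ (k + 1) :=
      mul_pos (pow_pos hκ k) (pow_pos (hpos _) _)
    simp only [hg]
    rw [Real.rpow_def_of_pos hb,
      Real.log_mul (pow_pos hκ k).ne' (pow_pos (hpos _) _).ne',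
      Real.log_pow, Real.log_pow]
    simp only [hA, hB]
    push_cast
    ring_nf
  have hrlim : Tendsto
      (fun k : ℕ => ((k : ℝ) * A + ((k : ℝ) + 1) * B) / (φ k : ℝ))
      atTop (nhds ((A + B) / ((m : ℝ) + 2))) := by
    have h0 : Tendsto (fun k : ℕ => 1 / (k : ℝ)) atTop (nhds 0) :=
      tendsto_one_div_atTop_nhds_zero_nat
    have hnum : Tendsto (fun k : ℕ => A + (1 + 1 / (k : ℝ)) * B) atTop
        (nhds (A + B)) := by
      have := (((h0.const_add (1:ℝ)).mul_const B).const_add A)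
      simpa using this
    have hden : Tendsto (fun k : ℕ => ((m : ℝ) + 2) + ((m : ℝ) + 1) * (1 / (k : ℝ)))
        atTop (nhds ((m : ℝ) + 2)) := by
      have := (h0.const_mul ((m : ℝ) + 1)).const_add ((m : ℝ) + 2)
      simpa using this
    have hdiv := hnum.div hden (by positivity)
    refine hdiv.congr' ?_
    filter_upwards [eventually_ge_atTop 1] with k hk
    have hk0 : (k : ℝ) ≠ 0 := by
      have : (1:ℝ) ≤ (k:ℝ) := by exact_mod_cast hk
      linarith
    rw [Pi.div_apply, hφcast k]
    field_simp
  have hglim : Tendsto g atTop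
      (nhds ((κ * s (m + 1)) ^ (1 / ((m : ℝ) + 2)))) := by
    have hT : (κ * s (m + 1)) ^ (1 / ((m : ℝ) + 2))
        = Real.exp ((A + B) / ((m : ℝ) + 2)) := by
      rw [Real.rpow_def_of_pos (mul_pos hκ (hpos _)),
        Real.log_mul hκ.ne' (hpos (m+1)).ne', ← hA, ← hB]
      ring_nf
    rw [hT]
    have := (Real.continuous_exp.tendsto _).comp hrlim
    refine this.congr fun k => (hgexp k).symm
  -- combine
  have hF : Tendsto (fun k => ENNReal.ofReal (g k)) atTop
      (nhds (ENNReal.ofReal ((κ * s (m + 1)) ^ (1 / ((m : ℝ) + 2))))) :=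
    (ENNReal.continuous_ofReal.tendsto _).comp hglim
  have hfinal : ENNReal.ofReal ((κ * s (m + 1)) ^ (1 / ((m : ℝ) + 2))) ≤ lam :=
    le_of_tendsto_of_tendsto' hF hGs fun k => ENNReal.ofReal_le_ofReal (hgle k)
  have hcast : ((m + 2 : ℕ) : ℝ) = (m : ℝ) + 2 := by push_cast; ring
  rw [hcast]
  exact hfinal
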